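/- Let γ = (r₁e_{i₁}) * ⋯ * (r_n e_{i_n}) be an axis path in ℝ^d with all r_k ≠ 0 and i_k ≠ i_{k+1} for k = 1,…,n−1, and let w* = (i₁,…,i_n) be the associated square free word of length n. Then the signature coefficient of γ at w* equals C_γ(w*) = r₁ r₂ ⋯ r_n, and in particular C_γ(w*) ≠ 0. -/

import Mathlib

open MeasureTheory

/-- The signature coefficient of a path with (a.e.) derivative `D` over the time
interval `[s, t]`, at the word given as a list of letters in `Fin d`:
`sigCoeff D (j₁ :: w) s t = ∫_{s}^{t} D(u)^{(j₁)} · sigCoeff D w u t du`,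
which unfolds to the iterated integral over the simplex
`∫_{s<u₁<⋯<u_m<t} D(u₁)^{(j₁)} ⋯ D(u_m)^{(j_m)} du`. -/
noncomputable def sigCoeff {d : ℕ} (D : ℝ → Fin d → ℝ) : List (Fin d) → ℝ → ℝ → ℝ
  | [], _, _ => 1
  | j :: w, s, t => ∫ u in s..t, D u j * sigCoeff D w u t

/-- The derivative of the axis path `(r₁ e_{i₁}) * ⋯ * (r_n e_{i_n})` parametrized on
`[0, n]`: on the interval `(k-1, k)` it equals `r_k e_{i_k}`. -/
noncomputable def axisDeriv {d n : ℕ} (r : Fin n → ℝ) (i : Fin n → Fin d) (u : ℝ)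
    (j : Fin d) : ℝ :=
  ∑ k : Fin n, if (k : ℝ) < u ∧ u < (k : ℝ) + 1 ∧ i k = j then r k else 0

lemma axisDeriv_eq_zero {d n : ℕ} (r : Fin n → ℝ) (i : Fin n → Fin d) (u : ℝ) (j : Fin d)
    (h : ∀ k : Fin n, ¬((k : ℝ) < u ∧ u < (k : ℝ) + 1 ∧ i k = j)) :
    axisDeriv r i u j = 0 :=
  Finset.sum_eq_zero fun k _ => if_neg (h k)

lemma axisDeriv_eq {d n : ℕ} (r : Fin n → ℝ) (i : Fin n → Fin d) (k : ℕ) (hk : k < n)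
    (u : ℝ) (h1 : (k : ℝ) < u) (h2 : u < (k : ℝ) + 1) (j : Fin d) :
    axisDeriv r i u j = if i ⟨k, hk⟩ = j then r ⟨k, hk⟩ else 0 := by
  unfold axisDeriv
  rw [Finset.sum_eq_single (⟨k, hk⟩ : Fin n)]
  · by_cases hij : i ⟨k, hk⟩ = j
    · rw [if_pos hij, if_pos ⟨h1, h2, hij⟩]
    · rw [if_neg hij, if_neg]
      rintro ⟨_, _, hh⟩; exact hij hh
  · intro b _ hb
    rw [if_neg]
    rintro ⟨hb1, hb2, _⟩
    apply hb
    refine Fin.ext ?_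
    rcases lt_or_gt_of_ne (fun h : (b : ℕ) = k => hb (Fin.ext h)) with h | h
    · exfalso
      have : ((b : ℕ) : ℝ) + 1 ≤ (k : ℝ) := by exact_mod_cast Nat.succ_le_of_lt h
      linarith
    · exfalso
      have : ((k : ℕ) : ℝ) + 1 ≤ ((b : ℕ) : ℝ) := by exact_mod_cast Nat.succ_le_of_lt h
      linarith
  · intro h; exact absurd (Finset.mem_univ _) h

lemma integral_ind_Ioo (c s : ℝ) (m : ℕ) (N : ℝ) (h1 : (m : ℝ) + 1 ≤ N)
    (h2 : (m : ℝ) - 1 ≤ s) :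
    (∫ u in s..N, (Set.Ioo (m : ℝ) ((m : ℝ) + 1)).indicator (fun _ => c) u)
      = c * min (max ((m : ℝ) + 1 - s) 0) 1 := by
  rcases le_total s N with hsN | hsN
  · rw [intervalIntegral.integral_of_le hsN,
      MeasureTheory.setIntegral_indicator measurableSet_Ioo,
      MeasureTheory.setIntegral_const]
    have hset : Set.Ioc s N ∩ Set.Ioo (m : ℝ) ((m : ℝ) + 1) = Set.Ioo (max s m) ((m:ℝ)+1) := by
      ext u
      simp only [Set.mem_inter_iff, Set.mem_Ioc, Set.mem_Ioo, max_lt_iff]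
      constructor
      · rintro ⟨⟨hu1, hu2⟩, hu3, hu4⟩; exact ⟨⟨hu1, hu3⟩, hu4⟩
      · rintro ⟨⟨hu1, hu3⟩, hu4⟩; exact ⟨⟨hu1, by linarith⟩, hu3, hu4⟩
    rw [hset, Real.volume_real_Ioo, smul_eq_mul, mul_comm]
    congr 1
    rcases le_total s (m : ℝ) with h | h
    · rw [max_eq_right h]
      have e1 : max ((m:ℝ) + 1 - s) 0 = (m:ℝ) + 1 - s := max_eq_left (by linarith)
      rw [e1, min_eq_right (by linarith), max_eq_left (by linarith)]
      ring
    · rw [max_eq_left h]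
      rcases le_total s ((m:ℝ)+1) with h' | h'
      · have e1 : max ((m:ℝ) + 1 - s) 0 = (m:ℝ) + 1 - s := max_eq_left (by linarith)
        rw [e1, min_eq_left (by linarith)]
      · have e1 : max ((m:ℝ) + 1 - s) 0 = 0 := max_eq_right (by linarith)
        rw [e1]
        simp
  · rw [intervalIntegral.integral_symm, intervalIntegral.integral_of_le hsN,
      MeasureTheory.setIntegral_indicator measurableSet_Ioo]
    have hset : Set.Ioc N s ∩ Set.Ioo (m : ℝ) ((m : ℝ) + 1) = ∅ := by
      ext u
      simp only [Set.mem_inter_iff, Set.mem_Ioc, Set.mem_Ioo, Set.mem_empty_iff_false,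
        iff_false]
      rintro ⟨⟨hu1, _⟩, _, hu4⟩; linarith
    rw [hset]
    have e1 : max ((m:ℝ) + 1 - s) 0 = 0 := max_eq_right (by linarith)
    simp [e1]

lemma pointwise_eq {d n : ℕ} (r : Fin n → ℝ) (i : Fin n → Fin d)
    (hi : ∀ (k : ℕ) (h : k + 1 < n), i ⟨k, by omega⟩ ≠ i ⟨k + 1, h⟩)
    (m : ℕ) (hm : m < n) (g : ℝ → ℝ) (c : ℝ)
    (hmid : ∀ u : ℝ, (m : ℝ) < u → u < (m : ℝ) + 1 → g u = c)
    (hfar : ∀ u : ℝ, (m : ℝ) + 2 ≤ u → axisDeriv r i u (i ⟨m, hm⟩) * g u = 0)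
    (u : ℝ) (hu : (m : ℝ) - 1 ≤ u) :
    axisDeriv r i u (i ⟨m, hm⟩) * g u
      = (Set.Ioo (m : ℝ) ((m : ℝ) + 1)).indicator (fun _ => r ⟨m, hm⟩ * c) u := by
  by_cases hA : u ∈ Set.Ioo (m : ℝ) ((m : ℝ) + 1)
  · obtain ⟨hA1, hA2⟩ := hA
    rw [Set.indicator_of_mem (Set.mem_Ioo.mpr ⟨hA1, hA2⟩), axisDeriv_eq r i m hm u hA1 hA2, if_pos rfl,
      hmid u hA1 hA2]
  · rw [Set.indicator_of_notMem hA]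
    rcases le_or_gt u ((m : ℝ) + 1) with hB | hB
    · rw [axisDeriv_eq_zero, zero_mul]
      rintro k ⟨hk1, hk2, hk3⟩
      have hkm : (k : ℕ) < m + 1 := by
        have : ((k : ℕ) : ℝ) < ((m + 1 : ℕ) : ℝ) := by push_cast; linarith
        exact_mod_cast this
      have hmk : m < (k : ℕ) + 2 := by
        have : ((m : ℕ) : ℝ) < ((k : ℕ) + 2 : ℕ) := by push_cast; linarith
        exact_mod_cast this
      rcases Nat.lt_or_ge (k : ℕ) m with hkm' | hkm'
      · have hk : (k : ℕ) = m - 1 := by omega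
        have hmn' : (m - 1) + 1 < n := by omega
        have e1 : k = (⟨m - 1, by omega⟩ : Fin n) := Fin.ext hk
        have e2 : (⟨m, hm⟩ : Fin n) = (⟨(m - 1) + 1, hmn'⟩ : Fin n) := Fin.ext (show m = (m-1)+1 by omega)
        rw [e1, e2] at hk3
        exact hi (m - 1) hmn' hk3
      · have hk : ((k : ℕ) : ℝ) = (m : ℝ) := by
          have : (k : ℕ) = m := by omega
          exact_mod_cast this
        exact hA (Set.mem_Ioo.mpr ⟨by rw [← hk]; exact hk1, by rw [← hk]; exact hk2⟩)
    · rcases le_or_gt ((m : ℝ) + 2) u with hC | hC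
      · exact hfar u hC
      · rw [axisDeriv_eq_zero, zero_mul]
        rintro k ⟨hk1, hk2, hk3⟩
        have h1 : (k : ℕ) < m + 2 := by
          have : ((k : ℕ) : ℝ) < ((m + 2 : ℕ) : ℝ) := by push_cast; linarith
          exact_mod_cast this
        have h2 : m + 1 < (k : ℕ) + 1 := by
          have : ((m + 1 : ℕ) : ℝ) < ((k : ℕ) + 1 : ℕ) := by push_cast; linarith
          exact_mod_cast this
        have hmn' : m + 1 < n := by have := k.isLt; omega
        have e1 : k = (⟨m + 1, hmn'⟩ : Fin n) := Fin.ext (show (k:ℕ) = m + 1 by omega)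
        rw [e1] at hk3
        exact hi m hmn' hk3.symm

lemma key {d n : ℕ} (r : Fin n → ℝ) (i : Fin n → Fin d)
    (hi : ∀ (k : ℕ) (h : k + 1 < n), i ⟨k, by omega⟩ ≠ i ⟨k + 1, h⟩) :
    ∀ (t m : ℕ), m + t + 1 = n → ∀ s : ℝ, (m : ℝ) - 1 ≤ s →
      sigCoeff (axisDeriv r i) (List.drop m (List.ofFn i)) s n
        = (∏ k ∈ Finset.Ico m n, if h : k < n then r ⟨k, h⟩ else 1)
          * min (max ((m : ℝ) + 1 - s) 0) 1 := by
  intro t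
  induction t with
  | zero =>
    intro m hmn s hs
    have hm : m < n := by omega
    have hmnR : (m : ℝ) + 1 ≤ (n : ℝ) := by exact_mod_cast Nat.le_of_eq hmn
    have hmnE : (n : ℝ) ≤ (m : ℝ) + 1 := by exact_mod_cast Nat.le_of_eq hmn.symm
    have hdrop : List.drop m (List.ofFn i) = [i ⟨m, hm⟩] := by
      rw [List.drop_eq_getElem_cons (by simp only [List.length_ofFn]; omega)]
      simp only [List.getElem_ofFn]
      congr 1
      apply List.drop_eq_nil_of_le
      simp only [List.length_ofFn]; omega
    rw [hdrop]
    simp only [sigCoeff]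
    rw [intervalIntegral.integral_congr (g :=
      (Set.Ioo (m : ℝ) ((m : ℝ) + 1)).indicator (fun _ => r ⟨m, hm⟩ * 1))]
    · rw [integral_ind_Ioo _ s m (n : ℝ) hmnR hs]
      have : Finset.Ico m n = {m} := by
        have e : n = m + 1 := by omega
        rw [e]; exact Nat.Ico_succ_singleton m
      rw [this, Finset.prod_singleton, dif_pos hm, mul_one]
    · intro u hu
      have hu1 : (m : ℝ) - 1 ≤ u := by
        have h1 : min s (n : ℝ) ≤ u := (Set.mem_Icc.mp hu).1
        have h2 : (m : ℝ) - 1 ≤ min s (n : ℝ) := le_min hs (by linarith)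
        linarith
      exact pointwise_eq r i hi m hm (fun u => 1) 1 (fun _ _ _ => rfl)
        (fun v hv => by
          rw [axisDeriv_eq_zero, zero_mul]
          rintro k ⟨hk1, hk2, hk3⟩
          have : ((k : ℕ) : ℝ) + 1 ≤ (n : ℝ) := by exact_mod_cast k.isLt
          linarith) u hu1
  | succ t ih =>
    intro m hmn s hs
    have hm : m < n := by omega
    have hm1 : m + 1 < n := by omega
    have hmnR : (m : ℝ) + 1 ≤ (n : ℝ) := by exact_mod_cast hm1.le
    have hdrop : List.drop m (List.ofFn i) =
        i ⟨m, hm⟩ :: List.drop (m + 1) (List.ofFn i) := by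
      rw [List.drop_eq_getElem_cons (by simp only [List.length_ofFn]; omega)]
      simp only [List.getElem_ofFn]
    rw [hdrop]
    simp only [sigCoeff]
    set P1 : ℝ := ∏ k ∈ Finset.Ico (m + 1) n, (if h : k < n then r ⟨k, h⟩ else 1) with hP1
    have hIH : ∀ u : ℝ, (m : ℝ) ≤ u →
        sigCoeff (axisDeriv r i) (List.drop (m + 1) (List.ofFn i)) u (n : ℝ)
          = P1 * min (max ((m : ℝ) + 2 - u) 0) 1 := by
      intro u hu
      have h2 := ih (m + 1) (by omega) u (by push_cast; linarith)
      rw [h2, ← hP1]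
      push_cast
      ring_nf
    rw [intervalIntegral.integral_congr (g :=
      (Set.Ioo (m : ℝ) ((m : ℝ) + 1)).indicator (fun _ => r ⟨m, hm⟩ * P1))]
    · rw [integral_ind_Ioo _ s m (n : ℝ) hmnR hs]
      rw [Finset.prod_eq_prod_Ico_succ_bot hm, dif_pos hm, ← hP1, mul_assoc]
    · intro u hu
      have hu1 : (m : ℝ) - 1 ≤ u := by
        have h1 : min s (n : ℝ) ≤ u := (Set.mem_Icc.mp hu).1
        have h2 : (m : ℝ) - 1 ≤ min s (n : ℝ) := le_min hs (by linarith)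
        linarith
      show axisDeriv r i u (i ⟨m, hm⟩) *
          sigCoeff (axisDeriv r i) (List.drop (m + 1) (List.ofFn i)) u (n : ℝ) = _
      refine pointwise_eq r i hi m hm
        (fun v => sigCoeff (axisDeriv r i) (List.drop (m + 1) (List.ofFn i)) v (n : ℝ))
        P1 ?_ ?_ u hu1
      · intro v hv1 hv2
        show sigCoeff (axisDeriv r i) (List.drop (m + 1) (List.ofFn i)) v (n : ℝ) = P1
        rw [hIH v hv1.le]
        have e1 : max ((m : ℝ) + 2 - v) 0 = (m : ℝ) + 2 - v := max_eq_left (by linarith)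
        rw [e1, min_eq_right (by linarith), mul_one]
      · intro v hv
        show axisDeriv r i v (i ⟨m, hm⟩) *
          sigCoeff (axisDeriv r i) (List.drop (m + 1) (List.ofFn i)) v (n : ℝ) = 0
        rw [hIH v (by linarith)]
        have e1 : max ((m : ℝ) + 2 - v) 0 = 0 := max_eq_right (by linarith)
        rw [e1]
        simp

/-- The signature coefficient of the axis path `(r₁ e_{i₁}) * ⋯ * (r_n e_{i_n})`
(with all `r_k ≠ 0` and adjacent directions distinct) at the square free word
`w* = (i₁, …, i_n)` equals `r₁ ⋯ r_n`; in particular it is nonzero. -/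
theorem axis_path_coeff_at_longest_square_free_word
    {d n : ℕ} (hd : 0 < d) (hn : 0 < n) (r : Fin n → ℝ) (i : Fin n → Fin d)
    (hr : ∀ k, r k ≠ 0)
    (hi : ∀ (k : ℕ) (h : k + 1 < n), i ⟨k, by omega⟩ ≠ i ⟨k + 1, h⟩) :
    sigCoeff (axisDeriv r i) (List.ofFn i) 0 n = ∏ k, r k ∧
      sigCoeff (axisDeriv r i) (List.ofFn i) 0 n ≠ 0 := by
  have h := key r i hi (n - 1) 0 (by omega) 0 (by norm_num)
  rw [List.drop_zero] at h
  have hclamp : min (max ((0 : ℝ) + 1 - 0) 0) 1 = 1 := by norm_num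
  rw [Nat.cast_zero, hclamp, mul_one] at h
  have hprod : (∏ k ∈ Finset.Ico 0 n, if h : k < n then r ⟨k, h⟩ else 1) = ∏ k, r k := by
    rw [← Finset.range_eq_Ico, ← Fin.prod_univ_eq_prod_range (fun k => if h : k < n then r ⟨k, h⟩ else 1) n]
    apply Finset.prod_congr rfl
    intro k _
    rw [dif_pos k.isLt]
  rw [hprod] at h
  exact ⟨h, h ▸ Finset.prod_ne_zero_iff.mpr fun k _ => hr k⟩
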